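/- Let n ≥ 1, let A be an IFM of order n, let λ ∈ [0,1] and set α = (1+λ)/2. Then for every m ≥ 2 and all r, s, j, the entries in column j of the m-th power of A under the ∗ operation satisfy |(A^m)μ r j − (A^m)μ s j| ≤ α^(m−2) and |(A^m)ν r j − (A^m)ν s j| ≤ α^(m−2). -/
import Mathlib


open Filter Topology

/-- Membership scalar operation of the convex combination of max-min and
maxarithmetic mean–minarithmetic mean: `x ⊛ y = λ·min(x,y) + (1-λ)·(x+y)/2`. -/
noncomputable def starMu (lam x y : ℝ) : ℝ :=
  lam * min x y + (1 - lam) * ((x + y) / 2)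

/-- Non-membership scalar operation:
`x ⊛' y = λ·max(x,y) + (1-λ)·(x+y)/2`. -/
noncomputable def starNu (lam x y : ℝ) : ℝ :=
  lam * max x y + (1 - lam) * ((x + y) / 2)

/-- `A` (given by membership part `Amu` and non-membership part `Anu`) is an
intuitionistic fuzzy matrix. -/
def IsIFM (n : ℕ) (Amu Anu : Fin n → Fin n → ℝ) : Prop :=
  ∀ i j, 0 ≤ Amu i j ∧ 0 ≤ Anu i j ∧ Amu i j + Anu i j ≤ 1

/-- Powers of an IFM under the convex combination `∗` of the max-min and the
maxarithmetic mean–minarithmetic mean operations: `A^1 = A`,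
`A^(k+1) = A^k ∗ A` with
`(X ∗ A)μ i j = max_t (Xμ i t ⊛ Aμ t j)` and
`(X ∗ A)ν i j = min_t (Xν i t ⊛' Aν t j)`.
(The value at `0` is irrelevant; it is set to `A`.) -/
noncomputable def sPow (n : ℕ) (lam : ℝ) (Amu Anu : Fin n → Fin n → ℝ) :
    ℕ → (Fin n → Fin n → ℝ) × (Fin n → Fin n → ℝ)
  | 0 => (Amu, Anu)
  | 1 => (Amu, Anu)
  | m + 2 =>
    let X := sPow n lam Amu Anu (m + 1)
    (fun i j => ⨆ t : Fin n, starMu lam (X.1 i t) (Amu t j),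
     fun i j => ⨅ t : Fin n, starNu lam (X.2 i t) (Anu t j))

lemma starMu_lip {lam : ℝ} (h0 : 0 ≤ lam) (h1 : lam ≤ 1) (x x' y : ℝ) :
    |starMu lam x y - starMu lam x' y| ≤ (1 + lam) / 2 * |x - x'| := by
  unfold starMu
  have hmin : |min x y - min x' y| ≤ |x - x'| := by
    have := abs_min_sub_min_le_max x y x' y
    simpa using this.trans (by simp)
  have heq : lam * min x y + (1 - lam) * ((x + y) / 2)
      - (lam * min x' y + (1 - lam) * ((x' + y) / 2))
      = lam * (min x y - min x' y) + (1 - lam) / 2 * (x - x') := by ring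
  rw [heq]
  have h2 : |lam * (min x y - min x' y) + (1 - lam) / 2 * (x - x')|
      ≤ |lam * (min x y - min x' y)| + |(1 - lam) / 2 * (x - x')| := abs_add_le _ _
  have h3 : |lam * (min x y - min x' y)| ≤ lam * |x - x'| := by
    rw [abs_mul, abs_of_nonneg h0]
    exact mul_le_mul_of_nonneg_left hmin h0
  have h4 : |(1 - lam) / 2 * (x - x')| = (1 - lam) / 2 * |x - x'| := by
    rw [abs_mul, abs_of_nonneg (by linarith : (0:ℝ) ≤ (1 - lam) / 2)]
  linarith [h2, h3, h4.le, h4.ge]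

lemma starNu_lip {lam : ℝ} (h0 : 0 ≤ lam) (h1 : lam ≤ 1) (x x' y : ℝ) :
    |starNu lam x y - starNu lam x' y| ≤ (1 + lam) / 2 * |x - x'| := by
  unfold starNu
  have hmax : |max x y - max x' y| ≤ |x - x'| := by
    have := abs_max_sub_max_le_max x y x' y
    simpa using this.trans (by simp)
  have heq : lam * max x y + (1 - lam) * ((x + y) / 2)
      - (lam * max x' y + (1 - lam) * ((x' + y) / 2))
      = lam * (max x y - max x' y) + (1 - lam) / 2 * (x - x') := by ring
  rw [heq]
  have h2 : |lam * (max x y - max x' y) + (1 - lam) / 2 * (x - x')|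
      ≤ |lam * (max x y - max x' y)| + |(1 - lam) / 2 * (x - x')| := abs_add_le _ _
  have h3 : |lam * (max x y - max x' y)| ≤ lam * |x - x'| := by
    rw [abs_mul, abs_of_nonneg h0]
    exact mul_le_mul_of_nonneg_left hmax h0
  have h4 : |(1 - lam) / 2 * (x - x')| = (1 - lam) / 2 * |x - x'| := by
    rw [abs_mul, abs_of_nonneg (by linarith : (0:ℝ) ≤ (1 - lam) / 2)]
  linarith [h2, h3, h4.le, h4.ge]

lemma ciSup_abs_sub {n : ℕ} (hn : 0 < n) (f g : Fin n → ℝ) {c : ℝ}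
    (h : ∀ t, |f t - g t| ≤ c) : |(⨆ t, f t) - ⨆ t, g t| ≤ c := by
  haveI : Nonempty (Fin n) := Fin.pos_iff_nonempty.mp hn
  have bf : BddAbove (Set.range f) := (Set.finite_range f).bddAbove
  have bg : BddAbove (Set.range g) := (Set.finite_range g).bddAbove
  rw [abs_sub_le_iff]
  constructor
  · rw [sub_le_iff_le_add]
    exact ciSup_le fun t => by
      have h1 := (abs_sub_le_iff.mp (h t)).1
      have h2 := le_ciSup bg t
      linarith
  · rw [sub_le_iff_le_add]
    exact ciSup_le fun t => by
      have h1 := (abs_sub_le_iff.mp (h t)).2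
      have h2 := le_ciSup bf t
      linarith

lemma ciInf_abs_sub {n : ℕ} (hn : 0 < n) (f g : Fin n → ℝ) {c : ℝ}
    (h : ∀ t, |f t - g t| ≤ c) : |(⨅ t, f t) - ⨅ t, g t| ≤ c := by
  haveI : Nonempty (Fin n) := Fin.pos_iff_nonempty.mp hn
  have bf : BddBelow (Set.range f) := (Set.finite_range f).bddBelow
  have bg : BddBelow (Set.range g) := (Set.finite_range g).bddBelow
  rw [abs_sub_le_iff]
  constructor
  · have key : (⨅ t, f t) - c ≤ ⨅ t, g t := le_ciInf fun t => by
      have h1 := (abs_sub_le_iff.mp (h t)).1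
      have h2 := ciInf_le bf t
      linarith
    linarith
  · have key : (⨅ t, g t) - c ≤ ⨅ t, f t := le_ciInf fun t => by
      have h1 := (abs_sub_le_iff.mp (h t)).2
      have h2 := ciInf_le bg t
      linarith
    linarith

lemma starMu_mem {lam x y : ℝ} (h0 : 0 ≤ lam) (h1 : lam ≤ 1)
    (hx0 : 0 ≤ x) (hx1 : x ≤ 1) (hy0 : 0 ≤ y) (hy1 : y ≤ 1) :
    0 ≤ starMu lam x y ∧ starMu lam x y ≤ 1 := by
  unfold starMu
  constructor
  · nlinarith [le_min hx0 hy0]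
  · nlinarith [min_le_left x y]

lemma starNu_mem {lam x y : ℝ} (h0 : 0 ≤ lam) (h1 : lam ≤ 1)
    (hx0 : 0 ≤ x) (hx1 : x ≤ 1) (hy0 : 0 ≤ y) (hy1 : y ≤ 1) :
    0 ≤ starNu lam x y ∧ starNu lam x y ≤ 1 := by
  unfold starNu
  constructor
  · nlinarith [le_max_left x y]
  · nlinarith [max_le hx1 hy1]

/-- Entries in a fixed column of the `m`-th power under the `∗` operation
differ by at most `α^(m-2)`, where `α = (1+λ)/2`. -/
theorem sPow_column_close (n : ℕ) (hn : 1 ≤ n)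
    (Amu Anu : Fin n → Fin n → ℝ) (hA : IsIFM n Amu Anu)
    (lam : ℝ) (hlam : lam ∈ Set.Icc (0 : ℝ) 1)
    (alpha : ℝ) (halpha : alpha = (1 + lam) / 2)
    (m : ℕ) (hm : 2 ≤ m) (r s j : Fin n) :
    |(sPow n lam Amu Anu m).1 r j - (sPow n lam Amu Anu m).1 s j| ≤
        alpha ^ (m - 2) ∧
      |(sPow n lam Amu Anu m).2 r j - (sPow n lam Amu Anu m).2 s j| ≤
        alpha ^ (m - 2) := by
  obtain ⟨hl0, hl1⟩ := hlam
  have hnpos : 0 < n := hn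
  haveI : Nonempty (Fin n) := Fin.pos_iff_nonempty.mp hnpos
  have ha0 : 0 ≤ alpha := by rw [halpha]; linarith
  have hAmu0 : ∀ i j', 0 ≤ Amu i j' := fun i j' => (hA i j').1
  have hAmu1 : ∀ i j', Amu i j' ≤ 1 := fun i j' => by
    have := hA i j'; linarith [this.1, this.2.1, this.2.2]
  have hAnu0 : ∀ i j', 0 ≤ Anu i j' := fun i j' => (hA i j').2.1
  have hAnu1 : ∀ i j', Anu i j' ≤ 1 := fun i j' => by
    have := hA i j'; linarith [this.1, this.2.1, this.2.2]
  -- entries of sPow 2 lie in [0,1]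
  have hmu2 : ∀ i j', 0 ≤ (sPow n lam Amu Anu 2).1 i j' ∧
      (sPow n lam Amu Anu 2).1 i j' ≤ 1 := by
    intro i j'
    have h2 : (sPow n lam Amu Anu 2).1 i j'
        = ⨆ t : Fin n, starMu lam (Amu i t) (Amu t j') := rfl
    rw [h2]
    constructor
    · have t0 : Fin n := ⟨0, hnpos⟩
      have hle : starMu lam (Amu i t0) (Amu t0 j')
          ≤ ⨆ t : Fin n, starMu lam (Amu i t) (Amu t j') :=
        le_ciSup (f := fun t : Fin n => starMu lam (Amu i t) (Amu t j'))
          (Set.finite_range _).bddAbove t0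
      have := (starMu_mem hl0 hl1 (hAmu0 i t0) (hAmu1 i t0)
        (hAmu0 t0 j') (hAmu1 t0 j')).1
      linarith
    · exact ciSup_le fun t => (starMu_mem hl0 hl1 (hAmu0 i t) (hAmu1 i t)
        (hAmu0 t j') (hAmu1 t j')).2
  have hnu2 : ∀ i j', 0 ≤ (sPow n lam Amu Anu 2).2 i j' ∧
      (sPow n lam Amu Anu 2).2 i j' ≤ 1 := by
    intro i j'
    have h2 : (sPow n lam Amu Anu 2).2 i j'
        = ⨅ t : Fin n, starNu lam (Anu i t) (Anu t j') := rfl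
    rw [h2]
    constructor
    · exact le_ciInf fun t => (starNu_mem hl0 hl1 (hAnu0 i t) (hAnu1 i t)
        (hAnu0 t j') (hAnu1 t j')).1
    · have t0 : Fin n := ⟨0, hnpos⟩
      have hle : (⨅ t : Fin n, starNu lam (Anu i t) (Anu t j'))
          ≤ starNu lam (Anu i t0) (Anu t0 j') :=
        ciInf_le (f := fun t : Fin n => starNu lam (Anu i t) (Anu t j'))
          (Set.finite_range _).bddBelow t0
      have := (starNu_mem hl0 hl1 (hAnu0 i t0) (hAnu1 i t0)
        (hAnu0 t0 j') (hAnu1 t0 j')).2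
      linarith
  have key : ∀ k : ℕ, ∀ r s j : Fin n,
      |(sPow n lam Amu Anu (k + 2)).1 r j - (sPow n lam Amu Anu (k + 2)).1 s j|
        ≤ alpha ^ k ∧
      |(sPow n lam Amu Anu (k + 2)).2 r j - (sPow n lam Amu Anu (k + 2)).2 s j|
        ≤ alpha ^ k := by
    intro k
    induction k with
    | zero =>
      intro r s j
      constructor
      · rw [pow_zero, abs_sub_le_iff]
        have h1 := hmu2 r j; have h2 := hmu2 s j
        constructor <;> linarith [h1.1, h1.2, h2.1, h2.2]
      · rw [pow_zero, abs_sub_le_iff]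
        have h1 := hnu2 r j; have h2 := hnu2 s j
        constructor <;> linarith [h1.1, h1.2, h2.1, h2.2]
    | succ k ih =>
      intro r s j
      have hmu : (sPow n lam Amu Anu (k + 1 + 2)).1
          = fun i j' => ⨆ t : Fin n,
              starMu lam ((sPow n lam Amu Anu (k + 2)).1 i t) (Amu t j') := rfl
      have hnu : (sPow n lam Amu Anu (k + 1 + 2)).2
          = fun i j' => ⨅ t : Fin n,
              starNu lam ((sPow n lam Amu Anu (k + 2)).2 i t) (Anu t j') := rfl
      rw [hmu, hnu]
      constructor
      · refine ciSup_abs_sub hnpos _ _ fun t => ?_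
        calc |starMu lam ((sPow n lam Amu Anu (k + 2)).1 r t) (Amu t j)
              - starMu lam ((sPow n lam Amu Anu (k + 2)).1 s t) (Amu t j)|
            ≤ (1 + lam) / 2 * |(sPow n lam Amu Anu (k + 2)).1 r t
                - (sPow n lam Amu Anu (k + 2)).1 s t| := starMu_lip hl0 hl1 _ _ _
          _ ≤ alpha * alpha ^ k := by
              rw [← halpha]
              exact mul_le_mul_of_nonneg_left (ih r s t).1 ha0
          _ = alpha ^ (k + 1) := (pow_succ' alpha k).symm
      · refine ciInf_abs_sub hnpos _ _ fun t => ?_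
        calc |starNu lam ((sPow n lam Amu Anu (k + 2)).2 r t) (Anu t j)
              - starNu lam ((sPow n lam Amu Anu (k + 2)).2 s t) (Anu t j)|
            ≤ (1 + lam) / 2 * |(sPow n lam Amu Anu (k + 2)).2 r t
                - (sPow n lam Amu Anu (k + 2)).2 s t| := starNu_lip hl0 hl1 _ _ _
          _ ≤ alpha * alpha ^ k := by
              rw [← halpha]
              exact mul_le_mul_of_nonneg_left (ih r s t).2 ha0
          _ = alpha ^ (k + 1) := (pow_succ' alpha k).symm
  obtain ⟨k, rfl⟩ : ∃ k, m = k + 2 := ⟨m - 2, by omega⟩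
  simpa using key k r s j
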